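/- Let λ be a σ-finite measure on a measurable space V, E a finite-dimensional real normed vector space, Ψ : V → E measurable, and Ω = {Z ∈ E* : ∫ exp(−⟨Z, Ψ(x)⟩) λ(dx) < ∞}. If Z belongs to the topological interior of Ω in E*, then x ↦ ‖Ψ(x)‖ exp(−⟨Z, Ψ(x)⟩) is λ-integrable, and the function I₀ : W ↦ ∫ exp(−⟨W, Ψ(x)⟩) λ(dx) is Fréchet-differentiable at Z with derivative the linear map W ↦ −∫ ⟨W, Ψ(x)⟩ exp(−⟨Z, Ψ(x)⟩) λ(dx). In other words, at interior points of Ω the partition function can be differentiated under the integral sign, and its differential is given by minus the (unnormalized) mean of Ψ. -/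

import Mathlib

open MeasureTheory Metric

lemma partition_aux_net {E : Type*} [NormedAddCommGroup E] [NormedSpace ℝ E]
    [FiniteDimensional ℝ E] {r : ℝ} (hr : 0 < r) :
    ∃ S : Finset (E →L[ℝ] ℝ), (∀ W ∈ S, ‖W‖ ≤ 3 * r) ∧
      ∀ v : E, Real.exp (2 * r * ‖v‖) ≤ ∑ W ∈ S, Real.exp (W v) := by
  classical
  have hcomp : IsCompact (sphere (0 : E →L[ℝ] ℝ) (3 * r)) := isCompact_sphere _ _
  obtain ⟨t, hts, htfin, htcov⟩ := hcomp.finite_cover_balls hr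
  refine ⟨insert 0 htfin.toFinset, ?_, ?_⟩
  · intro W hW
    rcases Finset.mem_insert.1 hW with h | h
    · simp [h]; positivity
    · have := hts (htfin.mem_toFinset.1 h)
      rw [mem_sphere_zero_iff_norm] at this
      exact this.le
  · intro v
    have hnonneg : ∀ W ∈ insert (0 : E →L[ℝ] ℝ) htfin.toFinset, 0 ≤ Real.exp (W v) :=
      fun W _ => (Real.exp_pos _).le
    by_cases hv : v = 0
    · subst hv
      have h1 : Real.exp ((0 : E →L[ℝ] ℝ) (0 : E)) ≤ ∑ W ∈ insert 0 htfin.toFinset,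
          Real.exp (W (0 : E)) :=
        Finset.single_le_sum hnonneg (Finset.mem_insert_self _ _)
      simpa using h1
    · obtain ⟨g, hg1, hgv0⟩ := exists_dual_vector ℝ v (norm_ne_zero_iff.2 hv)
      have hgv : g v = ‖v‖ := by exact_mod_cast hgv0
      set U : E →L[ℝ] ℝ := (3 * r) • g with hU
      have hUs : U ∈ sphere (0 : E →L[ℝ] ℝ) (3 * r) := by
        rw [mem_sphere_zero_iff_norm, hU, norm_smul (3*r) g, hg1]
        simp [abs_of_pos (by positivity : (0:ℝ) < 3 * r)]
        positivity
      obtain ⟨W, hWt, hUW⟩ := Set.mem_iUnion₂.1 (htcov hUs)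
      have hWS : W ∈ insert (0 : E →L[ℝ] ℝ) htfin.toFinset :=
        Finset.mem_insert_of_mem (htfin.mem_toFinset.2 hWt)
      have hUv : U v = 3 * r * ‖v‖ := by
        rw [hU]
        simp only [ContinuousLinearMap.smul_apply, smul_eq_mul]
        rw [hgv]
      have hdiff : (U - W) v ≤ r * ‖v‖ := by
        calc (U - W) v ≤ ‖(U - W) v‖ := le_abs_self _
          _ ≤ ‖U - W‖ * ‖v‖ := (U - W).le_opNorm v
          _ ≤ r * ‖v‖ := by
              apply mul_le_mul_of_nonneg_right _ (norm_nonneg v)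
              rw [← dist_eq_norm]
              exact (mem_ball.1 hUW).le
      have hWv : 2 * r * ‖v‖ ≤ W v := by
        have : W v = U v - (U - W) v := by simp
        rw [this, hUv]; nlinarith [norm_nonneg v]
      calc Real.exp (2 * r * ‖v‖) ≤ Real.exp (W v) := Real.exp_le_exp.2 hWv
        _ ≤ _ := Finset.single_le_sum hnonneg hWS

lemma partition_aux_deriv {E : Type*} [NormedAddCommGroup E] [NormedSpace ℝ E]
    (v : E) (W₀ : E →L[ℝ] ℝ) :
    HasFDerivAt (fun W : E →L[ℝ] ℝ => Real.exp (-(W v)))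
      ((-(Real.exp (-(W₀ v)))) • ContinuousLinearMap.apply ℝ ℝ v) W₀ := by
  have h1 : HasFDerivAt (fun W : E →L[ℝ] ℝ => W v) (ContinuousLinearMap.apply ℝ ℝ v) W₀ :=
    (ContinuousLinearMap.apply ℝ ℝ v).hasFDerivAt
  have h3 := (Real.hasDerivAt_exp (-(W₀ v))).comp_hasFDerivAt W₀ h1.neg
  have h4 : (-(Real.exp (-(W₀ v)))) • ContinuousLinearMap.apply ℝ ℝ v =
      Real.exp (-W₀ v) • -(ContinuousLinearMap.apply ℝ ℝ v) := by
    rw [smul_neg, ← neg_smul]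
  rw [h4]; exact h3

lemma partition_aux_apply_norm {E : Type*} [NormedAddCommGroup E] [NormedSpace ℝ E] (v : E) :
    ‖ContinuousLinearMap.apply ℝ ℝ v‖ ≤ ‖v‖ :=
  ContinuousLinearMap.opNorm_le_bound _ (norm_nonneg v)
    (fun W => by rw [mul_comm]; exact W.le_opNorm v)

theorem partition_function_differentiable_interior
    {V : Type*} [MeasurableSpace V] (lam : Measure V) [SigmaFinite lam]
    {E : Type*} [NormedAddCommGroup E] [NormedSpace ℝ E] [FiniteDimensional ℝ E]
    [MeasurableSpace E] [BorelSpace E]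
    (Ψ : V → E) (hΨ : Measurable Ψ)
    (Z : E →L[ℝ] ℝ)
    (hZ : Z ∈ interior {W : E →L[ℝ] ℝ |
      ∫⁻ x, ENNReal.ofReal (Real.exp (-(W (Ψ x)))) ∂lam < ⊤}) :
    Integrable (fun x => ‖Ψ x‖ * Real.exp (-(Z (Ψ x)))) lam ∧
    ∃ D : (E →L[ℝ] ℝ) →L[ℝ] ℝ,
      (∀ W : E →L[ℝ] ℝ, D W = -∫ x, (W (Ψ x)) * Real.exp (-(Z (Ψ x))) ∂lam) ∧
      HasFDerivAt (fun W : E →L[ℝ] ℝ => ∫ x, Real.exp (-(W (Ψ x))) ∂lam) D Z := by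
  classical
  obtain ⟨ε, hε, hball⟩ := Metric.mem_nhds_iff.1 (mem_interior_iff_mem_nhds.1 hZ)
  set r : ℝ := ε / 4 with hrdef
  have hr : 0 < r := by positivity
  -- integrability of exp(-(W' ∘ Ψ)) for W' near Z
  have hexp_meas : ∀ W' : E →L[ℝ] ℝ,
      AEStronglyMeasurable (fun x => Real.exp (-(W' (Ψ x)))) lam := fun W' =>
    ((Real.continuous_exp.comp (continuous_neg.comp W'.continuous)).measurable.comp
      hΨ).aestronglyMeasurable
  have integrable_exp : ∀ W' : E →L[ℝ] ℝ, ‖W' - Z‖ < ε →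
      Integrable (fun x => Real.exp (-(W' (Ψ x)))) lam := by
    intro W' hW'
    have hmem : W' ∈ {W : E →L[ℝ] ℝ |
        ∫⁻ x, ENNReal.ofReal (Real.exp (-(W (Ψ x)))) ∂lam < ⊤} :=
      hball (by rwa [mem_ball, dist_eq_norm])
    refine ⟨hexp_meas W', ?_⟩
    rw [hasFiniteIntegral_iff_ofReal (ae_of_all _ fun x => (Real.exp_pos _).le)]
    exact hmem
  -- the net
  obtain ⟨S, hSnorm, hSbound⟩ := partition_aux_net (E := E) hr
  -- the bound
  set bound : V → ℝ := fun x => ‖Ψ x‖ * Real.exp (r * ‖Ψ x‖) * Real.exp (-(Z (Ψ x)))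
    with hbdef
  have hbound_nonneg : ∀ x, 0 ≤ bound x := fun x => by positivity
  have hbound_meas : AEStronglyMeasurable bound lam := by
    have : Continuous (fun v : E => ‖v‖ * Real.exp (r * ‖v‖) * Real.exp (-(Z v))) := by
      fun_prop
    exact (this.measurable.comp hΨ).aestronglyMeasurable
  have hg_int : Integrable
      (fun x => ∑ W ∈ S, (1 / r) * Real.exp (-((Z - W) (Ψ x)))) lam := by
    refine integrable_finset_sum _ (fun W hW => ?_)
    refine Integrable.const_mul ?_ _
    refine integrable_exp (Z - W) ?_
    have : ‖Z - W - Z‖ = ‖W‖ := by simp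
    rw [this]
    calc ‖W‖ ≤ 3 * r := hSnorm W hW
      _ < ε := by rw [hrdef]; linarith
  have hbound_le : ∀ x, bound x ≤ ∑ W ∈ S, (1 / r) * Real.exp (-((Z - W) (Ψ x))) := by
    intro x
    set v := Ψ x
    have h1 : r * ‖v‖ ≤ Real.exp (r * ‖v‖) :=
      le_trans (by linarith) (Real.add_one_le_exp _)
    have hepos : (0:ℝ) < Real.exp (r * ‖v‖) := Real.exp_pos _
    have hstep1 : ‖v‖ * Real.exp (r * ‖v‖) ≤ (1 / r) * Real.exp (2 * r * ‖v‖) := by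
      have h2 : Real.exp (2 * r * ‖v‖) = Real.exp (r * ‖v‖) * Real.exp (r * ‖v‖) := by
        rw [← Real.exp_add]; ring_nf
      rw [h2, one_div, ← div_eq_inv_mul, le_div_iff₀ hr]
      nlinarith [mul_le_mul_of_nonneg_right h1 hepos.le]
    have hstep2 : (1 / r) * Real.exp (2 * r * ‖v‖) ≤
        (1 / r) * ∑ W ∈ S, Real.exp (W v) :=
      mul_le_mul_of_nonneg_left (hSbound v) (by positivity)
    calc bound x = ‖v‖ * Real.exp (r * ‖v‖) * Real.exp (-(Z v)) := rfl
      _ ≤ ((1 / r) * ∑ W ∈ S, Real.exp (W v)) * Real.exp (-(Z v)) := by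
          apply mul_le_mul_of_nonneg_right (hstep1.trans hstep2) (Real.exp_pos _).le
      _ = ∑ W ∈ S, (1 / r) * Real.exp (-((Z - W) v)) := by
          rw [Finset.mul_sum, Finset.sum_mul]
          refine Finset.sum_congr rfl (fun W _ => ?_)
          rw [mul_assoc, ← Real.exp_add]
          congr 2
          simp [ContinuousLinearMap.sub_apply]
          ring
  have hbound_int : Integrable bound lam := by
    refine hg_int.mono' hbound_meas (ae_of_all _ fun x => ?_)
    rw [Real.norm_eq_abs, abs_of_nonneg (hbound_nonneg x)]
    exact hbound_le x
  -- first conjunct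
  have part1 : Integrable (fun x => ‖Ψ x‖ * Real.exp (-(Z (Ψ x)))) lam := by
    refine hbound_int.mono' ?_ (ae_of_all _ fun x => ?_)
    · have : Continuous (fun v : E => ‖v‖ * Real.exp (-(Z v))) := by fun_prop
      exact (this.measurable.comp hΨ).aestronglyMeasurable
    · rw [Real.norm_eq_abs, abs_of_nonneg (by positivity)]
      have h1 : (1:ℝ) ≤ Real.exp (r * ‖Ψ x‖) :=
        Real.one_le_exp (by positivity)
      show ‖Ψ x‖ * Real.exp (-(Z (Ψ x))) ≤
        ‖Ψ x‖ * Real.exp (r * ‖Ψ x‖) * Real.exp (-(Z (Ψ x)))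
      nlinarith [mul_le_mul_of_nonneg_left h1
        (mul_nonneg (norm_nonneg (Ψ x)) (Real.exp_pos (-(Z (Ψ x)))).le)]
  refine ⟨part1, ?_⟩
  -- derivative
  borelize ((E →L[ℝ] ℝ) →L[ℝ] ℝ)
  set F' : V → (E →L[ℝ] ℝ) →L[ℝ] ℝ :=
    fun x => (-(Real.exp (-(Z (Ψ x))))) • ContinuousLinearMap.apply ℝ ℝ (Ψ x) with hF'def
  have hF'_meas : AEStronglyMeasurable F' lam := by
    have hc : Continuous (fun v : E =>
        (-(Real.exp (-(Z v)))) • ContinuousLinearMap.apply ℝ ℝ v) := by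
      exact (Real.continuous_exp.comp (continuous_neg.comp Z.continuous)).neg.smul
        (ContinuousLinearMap.apply ℝ ℝ).continuous
    exact ((hc.measurable).comp hΨ).aestronglyMeasurable
  have h_lip : ∀ᵐ x ∂lam, LipschitzOnWith (Real.nnabs (bound x))
      (fun W : E →L[ℝ] ℝ => Real.exp (-(W (Ψ x)))) (ball Z r) := by
    refine ae_of_all _ fun x => ?_
    set v := Ψ x
    refine (convex_ball Z r).lipschitzOnWith_of_nnnorm_hasFDerivWithin_le
      (f' := fun W : E →L[ℝ] ℝ => (-(Real.exp (-(W v)))) • ContinuousLinearMap.apply ℝ ℝ v)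
      (fun W _ => (partition_aux_deriv v W).hasFDerivWithinAt) (fun W hW => ?_)
    rw [← NNReal.coe_le_coe, coe_nnnorm, Real.coe_nnabs]
    have hZW : -(W v) ≤ -(Z v) + r * ‖v‖ := by
      have h1 : (Z - W) v ≤ ‖Z - W‖ * ‖v‖ :=
        le_trans (le_abs_self _) ((Z - W).le_opNorm v)
      have h2 : ‖Z - W‖ ≤ r := by
        rw [mem_ball, dist_eq_norm] at hW
        rw [norm_sub_rev]; exact hW.le
      have h3 : (Z - W) v = Z v - W v := by simp
      nlinarith [norm_nonneg v]
    refine ContinuousLinearMap.opNorm_le_bound _ (abs_nonneg _) fun U => ?_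
    have hUv : |U v| ≤ ‖U‖ * ‖v‖ := by
      rw [← Real.norm_eq_abs]; exact U.le_opNorm v
    have he : Real.exp (-(W v)) ≤ Real.exp (-(Z v) + r * ‖v‖) := Real.exp_le_exp.2 hZW
    have hb : Real.exp (-(Z v) + r * ‖v‖) * ‖v‖ = bound x := by
      rw [hbdef, Real.exp_add]
      show _ = ‖v‖ * Real.exp (r * ‖v‖) * Real.exp (-(Z v))
      ring
    calc ‖((-(Real.exp (-(W v)))) • ContinuousLinearMap.apply ℝ ℝ v) U‖
        = Real.exp (-(W v)) * |U v| := by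
          simp [ContinuousLinearMap.smul_apply, smul_eq_mul, Real.norm_eq_abs, abs_mul,
            abs_of_pos (Real.exp_pos (-(W v)))]
      _ ≤ Real.exp (-(Z v) + r * ‖v‖) * (‖U‖ * ‖v‖) :=
          mul_le_mul he hUv (abs_nonneg _) (Real.exp_pos _).le
      _ = bound x * ‖U‖ := by rw [← hb]; ring
      _ ≤ |bound x| * ‖U‖ := mul_le_mul_of_nonneg_right (le_abs_self _) (norm_nonneg _)
  have h_diff : ∀ᵐ x ∂lam, HasFDerivAt
      (fun W : E →L[ℝ] ℝ => Real.exp (-(W (Ψ x)))) (F' x) Z :=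
    ae_of_all _ fun x => partition_aux_deriv (Ψ x) Z
  obtain ⟨hF'_int, hderiv⟩ := hasFDerivAt_integral_of_dominated_loc_of_lip
    (F := fun (W : E →L[ℝ] ℝ) x => Real.exp (-(W (Ψ x)))) (ball_mem_nhds Z hr)
    (Filter.Eventually.of_forall fun W => hexp_meas W)
    (integrable_exp Z (by simpa using hε)) hF'_meas h_lip hbound_int h_diff
  refine ⟨∫ x, F' x ∂lam, fun W => ?_, hderiv⟩
  rw [ContinuousLinearMap.integral_apply hF'_int, ← integral_neg]
  refine integral_congr_ae (ae_of_all _ fun x => ?_)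
  simp only [hF'def, ContinuousLinearMap.smul_apply, ContinuousLinearMap.apply_apply,
    smul_eq_mul]
  ring
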